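/- arXiv:2210.02319 — 5 statements merged into one kernel-verified Lean document; each statement's English description precedes it below -/
import Mathlib

section
/- Let β ∈ ℝ, let W be a real random variable on a probability space (Ω, P) whose law has density f_β on [0,1] (and 0 elsewhere) with respect to Lebesgue measure, and let W_0 be a real random variable, independent of W, taking values in {0} ∪ {2^k : k ∈ ℤ}; write π_{2^k} = P(W_0 = 2^k) for k ∈ ℤ. Set R = W_0 · 2^{−W}. Then for every real r > 0, P(R ≥ r) = ∑_{k∈ℤ} π_{2^k} · G_β(r/2^k). -/
open MeasureTheory
open scoped ENNReal

/-- The density `f_β`: for `β ≠ 0`, `f_β(x) = β e^{βx}/(e^β - 1)` on `[0,1]` and `0`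
elsewhere; `f_0` is the indicator of `[0,1]`. -/
noncomputable def fdens (β : ℝ) : ℝ → ℝ :=
  (Set.Icc (0 : ℝ) 1).indicator
    (fun x => if β = 0 then 1 else β * Real.exp (β * x) / (Real.exp β - 1))

/-- The (complementary) cumulative distribution function `G_β`. -/
noncomputable def Gfun (β : ℝ) (x : ℝ) : ℝ :=
  if x ≤ 1 / 2 then 1
  else if x < 1 then
    (if β = 0 then -Real.log x / Real.log 2
     else (x ^ (-β / Real.log 2) - 1) / (Real.exp β - 1))
  else 0

lemma gnonneg (β x : ℝ) :
    0 ≤ (if β = 0 then (1:ℝ) else β * Real.exp (β * x) / (Real.exp β - 1)) := by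
  split_ifs with h
  · norm_num
  · have hx : β * Real.exp (β * x) / (Real.exp β - 1)
        = (β / (Real.exp β - 1)) * Real.exp (β * x) := by ring
    rw [hx]
    have hpos : 0 < β / (Real.exp β - 1) := by
      rcases lt_or_gt_of_ne h with hβ | hβ
      · apply div_pos_of_neg_of_neg hβ
        have : Real.exp β < 1 := by rw [← Real.exp_zero]; exact Real.exp_lt_exp.mpr hβ
        linarith
      · apply div_pos hβ
        have : 1 < Real.exp β := by rw [← Real.exp_zero]; exact Real.exp_lt_exp.mpr hβ
        linarith
    positivity

lemma exp_sub_one_ne (β : ℝ) (h : β ≠ 0) : Real.exp β - 1 ≠ 0 := by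
  rcases lt_or_gt_of_ne h with hβ | hβ
  · have : Real.exp β < 1 := by rw [← Real.exp_zero]; exact Real.exp_lt_exp.mpr hβ
    linarith
  · have : 1 < Real.exp β := by rw [← Real.exp_zero]; exact Real.exp_lt_exp.mpr hβ
    linarith

lemma integral_g (β t : ℝ) (ht : 0 ≤ t) :
    ∫ x in Set.Icc (0:ℝ) t,
        (if β = 0 then (1:ℝ) else β * Real.exp (β * x) / (Real.exp β - 1)) =
      (if β = 0 then t else (Real.exp (β * t) - 1) / (Real.exp β - 1)) := by
  split_ifs with h
  · simp [Real.volume_Icc, ht]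
  · rw [MeasureTheory.integral_Icc_eq_integral_Ioc, ← intervalIntegral.integral_of_le ht]
    have hrw : ∀ x : ℝ, β * Real.exp (β * x) / (Real.exp β - 1)
        = (β / (Real.exp β - 1)) * Real.exp (β * x) := by intro x; ring
    simp_rw [hrw]
    rw [intervalIntegral.integral_const_mul,
      intervalIntegral.integral_comp_mul_left (fun x => Real.exp x) h]
    simp [integral_exp]
    have hne := exp_sub_one_ne β h
    field_simp

lemma cdf_eq (β c : ℝ) (hc : 0 < c) :
    ∫⁻ x in Set.Iic (-Real.logb 2 c), ENNReal.ofReal (fdens β x)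
      = ENNReal.ofReal (Gfun β c) := by
  set t := -Real.logb 2 c with htdef
  have hgc : Continuous fun x : ℝ =>
      (if β = 0 then (1:ℝ) else β * Real.exp (β * x) / (Real.exp β - 1)) := by
    split_ifs with h
    · exact continuous_const
    · fun_prop
  have hint : MeasureTheory.Integrable (fdens β) (volume.restrict (Set.Iic t)) := by
    apply MeasureTheory.Integrable.restrict
    unfold fdens
    rw [MeasureTheory.integrable_indicator_iff measurableSet_Icc]
    exact hgc.integrableOn_Icc
  have hnn : 0 ≤ᵐ[volume.restrict (Set.Iic t)] fdens β :=
    Filter.Eventually.of_forall fun x =>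
      Set.indicator_nonneg (fun y _ => gnonneg β y) x
  rw [← MeasureTheory.ofReal_integral_eq_lintegral_ofReal hint hnn]
  congr 1
  unfold fdens
  rw [MeasureTheory.setIntegral_indicator measurableSet_Icc]
  have hset : Set.Iic t ∩ Set.Icc 0 1 = Set.Icc 0 (min 1 t) := by
    ext x
    simp only [Set.mem_inter_iff, Set.mem_Iic, Set.mem_Icc, le_min_iff]
    constructor
    · rintro ⟨h1, h2, h3⟩; exact ⟨h2, h3, h1⟩
    · rintro ⟨h1, h2, h3⟩; exact ⟨h3, h1, h2⟩
  rw [hset]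
  have hlogb : ∀ y : ℝ, Real.logb 2 c ≤ y ↔ c ≤ (2:ℝ) ^ y := fun y =>
    Real.logb_le_iff_le_rpow one_lt_two hc
  by_cases hc2 : c ≤ 1 / 2
  · -- t ≥ 1
    have ht1 : (1:ℝ) ≤ t := by
      have : Real.logb 2 c ≤ -1 := by
        rw [hlogb (-1)]
        rw [show ((-1:ℝ)) = ((-1 : ℤ) : ℝ) by norm_num, Real.rpow_intCast]
        simpa using hc2
      simp only [htdef]; linarith
    rw [min_eq_left ht1, integral_g β 1 zero_le_one]
    rw [Gfun, if_pos hc2]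
    split_ifs with h
    · rfl
    · rw [mul_one, div_self (exp_sub_one_ne β h)]
  · have hc2' : 1 / 2 < c := lt_of_not_ge hc2
    have ht1 : t < 1 := by
      have : ¬ Real.logb 2 c ≤ -1 := by
        rw [hlogb (-1), show ((-1:ℝ)) = ((-1 : ℤ) : ℝ) by norm_num, Real.rpow_intCast]
        simpa using hc2'
      simp only [htdef]; push_neg at this; linarith
    by_cases hc1 : c < 1
    · -- 0 < t < 1
      have ht0 : 0 < t := by
        have : Real.logb 2 c < 0 := (Real.logb_neg_iff one_lt_two hc).mpr hc1
        simp only [htdef]; linarith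
      rw [min_eq_right ht1.le, integral_g β t ht0.le]
      rw [Gfun, if_neg hc2, if_pos hc1]
      have htlog : t = -Real.log c / Real.log 2 := by
        simp only [htdef, Real.logb]; ring
      split_ifs with h
    
      · exact htlog
      · have h2 : Real.log 2 ≠ 0 := (Real.log_pos one_lt_two).ne'
        have harg : c ^ (-β / Real.log 2) = Real.exp (β * t) := by
          rw [Real.rpow_def_of_pos hc, htlog]
          congr 1
          ring
        rw [harg]
    · -- t ≤ 0
      have hc1' : 1 ≤ c := le_of_not_gt hc1
      have ht0 : t ≤ 0 := by
        have : 0 ≤ Real.logb 2 c := Real.logb_nonneg one_lt_two hc1'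
        simp only [htdef]; linarith
      rw [Gfun, if_neg hc2, if_neg hc1]
      rw [min_eq_right (ht0.trans zero_le_one)]
      have hz : volume (Set.Icc (0:ℝ) t) = 0 := by
        rw [Real.volume_Icc]
        exact ENNReal.ofReal_eq_zero.mpr (by linarith)
      have hres : volume.restrict (Set.Icc (0:ℝ) t) = 0 :=
        MeasureTheory.Measure.restrict_eq_zero.mpr hz
      rw [hres, MeasureTheory.integral_zero_measure]

theorem stmt11 {Ω : Type*} [MeasurableSpace Ω] (P : Measure Ω) [IsProbabilityMeasure P]
    (β : ℝ) (W W₀ : Ω → ℝ) (hW : Measurable W) (hW₀ : Measurable W₀)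
    (hlaw : P.map W = volume.withDensity (fun x => ENNReal.ofReal (fdens β x)))
    (hindep : ProbabilityTheory.IndepFun W W₀ P)
    (hval : ∀ ω, W₀ ω = 0 ∨ ∃ k : ℤ, W₀ ω = (2 : ℝ) ^ k) :
    ∀ r : ℝ, 0 < r →
      P {ω | r ≤ W₀ ω * (2 : ℝ) ^ (-W ω)} =
        ∑' k : ℤ, P {ω | W₀ ω = (2 : ℝ) ^ k} * ENNReal.ofReal (Gfun β (r / (2 : ℝ) ^ k)) := by
  intro r hr
  have hiff : ∀ (k : ℤ) (x : ℝ),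
      (r ≤ (2:ℝ) ^ k * (2:ℝ) ^ (-x)) ↔ x ≤ -Real.logb 2 (r / (2:ℝ) ^ k) := by
    intro k x
    have hk : (0:ℝ) < (2:ℝ) ^ k := zpow_pos two_pos k
    rw [← div_le_iff₀' hk,
      ← Real.logb_le_iff_le_rpow one_lt_two (div_pos hr hk)]
    constructor <;> intro h <;> linarith
  have hE : {ω | r ≤ W₀ ω * (2:ℝ) ^ (-W ω)} =
      ⋃ k : ℤ, (W₀ ⁻¹' {(2:ℝ) ^ k} ∩ W ⁻¹' (Set.Iic (-Real.logb 2 (r / (2:ℝ) ^ k)))) := by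
    ext ω
    simp only [Set.mem_setOf_eq, Set.mem_iUnion, Set.mem_inter_iff,
      Set.mem_preimage, Set.mem_singleton_iff, Set.mem_Iic]
    constructor
    · intro hω
      rcases hval ω with h0 | ⟨k, hk⟩
      · rw [h0, zero_mul] at hω; linarith
      · exact ⟨k, hk, (hiff k (W ω)).mp (by rw [← hk]; exact hω)⟩
    · rintro ⟨k, hk, hle⟩
      rw [hk]
      exact (hiff k (W ω)).mpr hle
  have hm : ∀ k : ℤ, MeasurableSet
      (W₀ ⁻¹' {(2:ℝ) ^ k} ∩ W ⁻¹' (Set.Iic (-Real.logb 2 (r / (2:ℝ) ^ k)))) := fun k =>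
    (hW₀ (measurableSet_singleton _)).inter (hW measurableSet_Iic)
  have hd : Pairwise (Function.onFun Disjoint (fun k : ℤ =>
      W₀ ⁻¹' {(2:ℝ) ^ k} ∩ W ⁻¹' (Set.Iic (-Real.logb 2 (r / (2:ℝ) ^ k))))) := by
    intro j k hjk
    refine Set.disjoint_left.mpr ?_
    rintro ω ⟨hj, -⟩ ⟨hk2, -⟩
    exact hjk (zpow_right_injective₀ two_pos (by norm_num) (hj.symm.trans hk2))
  rw [hE, measure_iUnion hd hm]
  refine tsum_congr fun k => ?_
  have hk : (0:ℝ) < (2:ℝ) ^ k := zpow_pos two_pos k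
  rw [Set.inter_comm,
    hindep.measure_inter_preimage_eq_mul _ _ measurableSet_Iic (measurableSet_singleton _),
    mul_comm]
  congr 1
  rw [← Measure.map_apply hW measurableSet_Iic, hlaw,
    withDensity_apply _ measurableSet_Iic, cdf_eq β _ (div_pos hr hk)]
end

section
/- Let β = ln 2, let W be a real random variable on a probability space (Ω, P) whose law has density f_{ln 2}(x) = (ln 2)·e^{(ln 2)x}/(e^{ln 2} − 1) = (ln 2)·2^x on [0,1] (and 0 elsewhere) with respect to Lebesgue measure, and let W_0 be a real random variable, independent of W, taking values in {0} ∪ {2^k : k ∈ ℤ}; write π_{2^k} = P(W_0 = 2^k). Set R = W_0 · 2^{−W}. If S = ∑_{k∈ℤ} 2^k π_{2^k} < ∞, then R is integrable and E[R] = S · ln 2. -/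
open MeasureTheory
open scoped ENNReal

theorem stmt13 {Ω : Type*} [MeasurableSpace Ω] (P : Measure Ω) [IsProbabilityMeasure P]
    (W W₀ : Ω → ℝ) (hW : Measurable W) (hW₀ : Measurable W₀)
    (hlaw : P.map W = volume.withDensity (fun x => ENNReal.ofReal (fdens (Real.log 2) x)))
    (hindep : ProbabilityTheory.IndepFun W W₀ P)
    (hval : ∀ ω, W₀ ω = 0 ∨ ∃ k : ℤ, W₀ ω = (2 : ℝ) ^ k)
    (hS : (∑' k : ℤ, ENNReal.ofReal ((2 : ℝ) ^ k) * P {ω | W₀ ω = (2 : ℝ) ^ k}) ≠ ⊤) :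
    Integrable (fun ω => W₀ ω * (2 : ℝ) ^ (-W ω)) P ∧
      ∫ ω, W₀ ω * (2 : ℝ) ^ (-W ω) ∂P =
        (∑' k : ℤ, ENNReal.ofReal ((2 : ℝ) ^ k) * P {ω | W₀ ω = (2 : ℝ) ^ k}).toReal *
          Real.log 2 := by
  have hW₀nn : ∀ ω, 0 ≤ W₀ ω := by
    intro ω
    rcases hval ω with h | ⟨k, h⟩
    · simp [h]
    · rw [h]; positivity
  -- pointwise decomposition of `ofReal ∘ W₀`
  have hpt : ∀ ω, ENNReal.ofReal (W₀ ω) =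
      ∑' k : ℤ, Set.indicator {ω' | W₀ ω' = (2:ℝ)^k}
        (fun _ => ENNReal.ofReal ((2:ℝ)^k)) ω := by
    intro ω
    rcases hval ω with h | ⟨c, h⟩
    · rw [h, ENNReal.ofReal_zero]
      symm
      rw [ENNReal.tsum_eq_zero]
      intro k
      apply Set.indicator_of_notMem
      simp only [Set.mem_setOf_eq, h]
      exact fun hk => (zpow_ne_zero k (two_ne_zero)) hk.symm
    · symm
      rw [tsum_eq_single c ?_]
      · rw [Set.indicator_of_mem (by exact h), h]
      · intro k hk
        apply Set.indicator_of_notMem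
        simp only [Set.mem_setOf_eq, h]
        intro hmem
        exact hk (zpow_right_injective₀ (by norm_num : (0:ℝ) < 2) (by norm_num) hmem.symm)
  have hlint : ∫⁻ ω, ENNReal.ofReal (W₀ ω) ∂P
      = ∑' k : ℤ, ENNReal.ofReal ((2 : ℝ) ^ k) * P {ω | W₀ ω = (2 : ℝ) ^ k} := by
    rw [lintegral_congr hpt,
      lintegral_tsum (f := fun k => Set.indicator {ω' | W₀ ω' = (2:ℝ)^k}
        (fun _ => ENNReal.ofReal ((2:ℝ)^k)))
        (fun k => (Measurable.indicator measurable_const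
        (hW₀ (measurableSet_singleton ((2:ℝ)^k)))).aemeasurable)]
    exact tsum_congr fun k =>
      lintegral_indicator_const (hW₀ (measurableSet_singleton ((2:ℝ)^k))) _
  have hW₀int : Integrable W₀ P := by
    refine ⟨hW₀.aestronglyMeasurable, ?_⟩
    rw [hasFiniteIntegral_iff_ofReal (ae_of_all _ hW₀nn), hlint]
    exact hS.lt_top
  -- W is a.e. in [0,1]
  have hWae : ∀ᵐ ω ∂P, W ω ∈ Set.Icc (0:ℝ) 1 := by
    have hmap : P.map W (Set.Icc (0:ℝ) 1)ᶜ = 0 := by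
      rw [hlaw, withDensity_apply _ measurableSet_Icc.compl]
      have : ∀ᵐ x ∂(volume.restrict (Set.Icc (0:ℝ) 1)ᶜ),
          ENNReal.ofReal (fdens (Real.log 2) x) = 0 := by
        rw [ae_restrict_iff' measurableSet_Icc.compl]
        refine ae_of_all _ fun x hx => ?_
        simp [fdens, Set.indicator_of_notMem hx]
      rw [lintegral_congr_ae this, lintegral_zero]
    rw [ae_iff]
    have hset : {a | ¬ W a ∈ Set.Icc (0:ℝ) 1} = W ⁻¹' (Set.Icc (0:ℝ) 1)ᶜ := rfl
    rw [hset, ← Measure.map_apply hW measurableSet_Icc.compl]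
    exact hmap
  have hgm : Measurable fun x : ℝ => (2:ℝ) ^ (-x) := by
    have : (fun x : ℝ => (2:ℝ) ^ (-x)) = fun x => Real.exp (Real.log 2 * (-x)) := by
      funext x
      rw [Real.rpow_def_of_pos (by norm_num)]
    rw [this]
    exact Real.measurable_exp.comp (measurable_const.mul measurable_neg)
  have hgWm : Measurable fun ω => (2:ℝ) ^ (-W ω) := hgm.comp hW
  have hgbd : ∀ᵐ ω ∂P, ‖(2:ℝ) ^ (-W ω)‖ ≤ 1 := by
    filter_upwards [hWae] with ω hω
    rw [Real.norm_eq_abs, abs_of_nonneg (Real.rpow_nonneg (by norm_num) _)]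
    exact Real.rpow_le_one_of_one_le_of_nonpos one_le_two (neg_nonpos.2 hω.1)
  have hgint : Integrable (fun ω => (2:ℝ) ^ (-W ω)) P :=
    Integrable.mono' (integrable_const 1) hgWm.aestronglyMeasurable hgbd
  -- E[2^{-W}] = log 2
  have hEg : ∫ ω, (2:ℝ) ^ (-W ω) ∂P = Real.log 2 := by
    rw [← integral_map hW.aemeasurable hgm.aestronglyMeasurable, hlaw]
    have hd : (fun x => ENNReal.ofReal (fdens (Real.log 2) x))
        = fun x => ((fdens (Real.log 2) x).toNNReal : ℝ≥0∞) := rfl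
    rw [hd, integral_withDensity_eq_integral_smul
      (Measurable.real_toNNReal ?_) (fun x => (2:ℝ) ^ (-x))]
    · have heq : (fun x => (fdens (Real.log 2) x).toNNReal • (2:ℝ) ^ (-x))
          = Set.indicator (Set.Icc (0:ℝ) 1) (fun _ => Real.log 2) := by
        funext x
        by_cases hx : x ∈ Set.Icc (0:ℝ) 1
        · have hlog : Real.log 2 ≠ 0 := ne_of_gt (Real.log_pos (by norm_num))
          have h2 : Real.exp (Real.log 2) = 2 := Real.exp_log (by norm_num)
          have hfx : fdens (Real.log 2) x
              = Real.log 2 * Real.exp (Real.log 2 * x) := by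
            simp [fdens, Set.indicator_of_mem hx, hlog, h2]
            norm_num
          rw [Set.indicator_of_mem hx, hfx]
          have hnn : 0 ≤ Real.log 2 * Real.exp (Real.log 2 * x) :=
            mul_nonneg (le_of_lt (Real.log_pos (by norm_num))) (Real.exp_pos _).le
          rw [NNReal.smul_def, smul_eq_mul, Real.coe_toNNReal _ hnn,
            Real.rpow_def_of_pos (by norm_num : (0:ℝ) < 2)]
          rw [mul_assoc, ← Real.exp_add]
          ring_nf
          simp
        · rw [Set.indicator_of_notMem hx]
          have hfx : fdens (Real.log 2) x = 0 := Set.indicator_of_notMem hx _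
          simp [hfx]
      rw [heq, integral_indicator measurableSet_Icc, setIntegral_const,
        Real.volume_real_Icc]
      simp
    · refine Measurable.indicator ?_ measurableSet_Icc
      exact Measurable.ite (MeasurableSet.const _) measurable_const (by fun_prop)
  -- E[W₀] = S.toReal
  have hEW₀ : ∫ ω, W₀ ω ∂P
      = (∑' k : ℤ, ENNReal.ofReal ((2 : ℝ) ^ k) * P {ω | W₀ ω = (2 : ℝ) ^ k}).toReal := by
    rw [integral_eq_lintegral_of_nonneg_ae (ae_of_all _ hW₀nn) hW₀.aestronglyMeasurable, hlint]
  have hi : ProbabilityTheory.IndepFun W₀ (fun ω => (2:ℝ) ^ (-W ω)) P :=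
    hindep.symm.comp measurable_id hgm
  constructor
  · exact hi.integrable_mul hW₀int hgint
  · rw [hi.integral_fun_mul_eq_mul_integral hW₀.aestronglyMeasurable hgWm.aestronglyMeasurable, hEg, hEW₀]
end

section
/- Let β ∈ ℝ with β ∉ {0, ln 2}, let W be a real random variable on a probability space (Ω, P) whose law has density f_β(x) = β·e^{βx}/(e^β − 1) on [0,1] (and 0 elsewhere) with respect to Lebesgue measure, and let W_0 be a real random variable, independent of W, taking values in {0} ∪ {2^k : k ∈ ℤ}; write π_{2^k} = P(W_0 = 2^k). Set R = W_0 · 2^{−W}. If S = ∑_{k∈ℤ} 2^k π_{2^k} < ∞, then R is integrable and E[R] = S · β(e^β − 2) / (2(e^β − 1)(β − ln 2)). -/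
open MeasureTheory
open scoped ENNReal

lemma fdens_nonneg (β : ℝ) : ∀ x, 0 ≤ fdens β x := by
  intro x
  unfold fdens
  apply Set.indicator_nonneg
  intro y hy
  by_cases hβ0 : β = 0
  · simp [hβ0]
  simp only [if_neg hβ0]
  rcases lt_or_gt_of_ne hβ0 with h | h
  · apply div_nonneg_of_nonpos
    · exact mul_nonpos_of_nonpos_of_nonneg h.le (Real.exp_pos _).le
    · simpa using Real.exp_le_one_iff.mpr h.le
  · apply div_nonneg
    · positivity
    · simpa using (Real.one_lt_exp_iff.mpr h).le

lemma fdens_measurable (β : ℝ) : Measurable (fdens β) := by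
  unfold fdens
  apply Measurable.indicator _ measurableSet_Icc
  by_cases h : β = 0
  · simp only [if_pos h]; exact measurable_const
  · simp only [if_neg h]
    fun_prop

theorem stmt14 {Ω : Type*} [MeasurableSpace Ω] (P : Measure Ω) [IsProbabilityMeasure P]
    (β : ℝ) (hβ0 : β ≠ 0) (hβ2 : β ≠ Real.log 2)
    (W W₀ : Ω → ℝ) (hW : Measurable W) (hW₀ : Measurable W₀)
    (hlaw : P.map W = volume.withDensity (fun x => ENNReal.ofReal (fdens β x)))
    (hindep : ProbabilityTheory.IndepFun W W₀ P)
    (hval : ∀ ω, W₀ ω = 0 ∨ ∃ k : ℤ, W₀ ω = (2 : ℝ) ^ k)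
    (hS : (∑' k : ℤ, ENNReal.ofReal ((2 : ℝ) ^ k) * P {ω | W₀ ω = (2 : ℝ) ^ k}) ≠ ⊤) :
    Integrable (fun ω => W₀ ω * (2 : ℝ) ^ (-W ω)) P ∧
      ∫ ω, W₀ ω * (2 : ℝ) ^ (-W ω) ∂P =
        (∑' k : ℤ, ENNReal.ofReal ((2 : ℝ) ^ k) * P {ω | W₀ ω = (2 : ℝ) ^ k}).toReal *
          (β * (Real.exp β - 2) / (2 * (Real.exp β - 1) * (β - Real.log 2))) := by
  have hc : β - Real.log 2 ≠ 0 := sub_ne_zero.mpr hβ2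
  have he1 : Real.exp β - 1 ≠ 0 := by
    rw [sub_ne_zero]
    intro h
    exact hβ0 (by simpa [Real.exp_zero] using Real.exp_injective (by rw [h, Real.exp_zero]))
  -- rewrite rpow as exp
  have hg2 : ∀ w : ℝ, (2:ℝ) ^ (-w) = Real.exp (-Real.log 2 * w) := by
    intro w; rw [Real.rpow_def_of_pos two_pos]; ring_nf
  set g : ℝ → ℝ := fun w => Real.exp (-Real.log 2 * w) with hg
  have hgm : Measurable g := (Real.continuous_exp.comp (continuous_const.mul continuous_id)).measurable
  -- measurability of level sets
  have hms : ∀ k : ℤ, MeasurableSet {ω | W₀ ω = (2:ℝ) ^ k} := fun k =>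
    hW₀ (measurableSet_singleton _)
  have hinj : Function.Injective fun k : ℤ => (2:ℝ) ^ k :=
    zpow_right_injective₀ two_pos (by norm_num)
  have hW₀nn : ∀ ω, 0 ≤ W₀ ω := by
    intro ω
    rcases hval ω with h | ⟨k, h⟩
    · simp [h]
    · rw [h]; positivity
  -- the lintegral of W₀
  have hpt : ∀ ω, ENNReal.ofReal (W₀ ω) =
      ∑' k : ℤ, Set.indicator {ω | W₀ ω = (2:ℝ) ^ k}
        (fun _ => ENNReal.ofReal ((2:ℝ) ^ k)) ω := by
    intro ω
    rcases hval ω with h | ⟨k, h⟩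
    · rw [h]
      simp only [ENNReal.ofReal_zero]
      symm
      apply ENNReal.tsum_eq_zero.mpr
      intro k
      apply Set.indicator_of_notMem
      simp only [Set.mem_setOf_eq, h]
      intro hk
      have h2 : (0:ℝ) < 2 ^ k := by positivity
      exact absurd hk.symm h2.ne'
    · rw [h]
      symm
      rw [tsum_eq_single k]
      · rw [Set.indicator_of_mem (by simpa using h)]
      · intro j hj
        apply Set.indicator_of_notMem
        simp only [Set.mem_setOf_eq, h]
        exact fun hjk => hj (hinj hjk.symm)
  have hlint : ∫⁻ ω, ENNReal.ofReal (W₀ ω) ∂P =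
      ∑' k : ℤ, ENNReal.ofReal ((2:ℝ) ^ k) * P {ω | W₀ ω = (2:ℝ) ^ k} := by
    calc ∫⁻ ω, ENNReal.ofReal (W₀ ω) ∂P
        = ∫⁻ ω, ∑' k : ℤ, Set.indicator {ω | W₀ ω = (2:ℝ) ^ k}
            (fun _ => ENNReal.ofReal ((2:ℝ) ^ k)) ω ∂P := lintegral_congr hpt
      _ = ∑' k : ℤ, ∫⁻ ω, Set.indicator {ω | W₀ ω = (2:ℝ) ^ k}
            (fun _ => ENNReal.ofReal ((2:ℝ) ^ k)) ω ∂P :=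
          lintegral_tsum fun k =>
            ((measurable_const.indicator (hms k)).aemeasurable)
      _ = ∑' k : ℤ, ENNReal.ofReal ((2:ℝ) ^ k) * P {ω | W₀ ω = (2:ℝ) ^ k} := by
          congr 1
          funext k
          rw [lintegral_indicator (hms k), setLIntegral_const]
  -- W₀ is integrable
  have hW₀int : Integrable W₀ P := by
    refine ⟨hW₀.aestronglyMeasurable, ?_⟩
    rw [hasFiniteIntegral_iff_ofReal (ae_of_all _ hW₀nn), hlint]
    exact hS.lt_top
  have hW₀val : ∫ ω, W₀ ω ∂P =
      (∑' k : ℤ, ENNReal.ofReal ((2:ℝ) ^ k) * P {ω | W₀ ω = (2:ℝ) ^ k}).toReal := by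
    rw [integral_eq_lintegral_of_nonneg_ae (ae_of_all _ hW₀nn)
      hW₀.aestronglyMeasurable, hlint]
  -- a.e., W ∈ [0,1]
  have hWae : ∀ᵐ ω ∂P, W ω ∈ Set.Icc (0:ℝ) 1 := by
    have h0 : P.map W (Set.Icc (0:ℝ) 1)ᶜ = 0 := by
      rw [hlaw, withDensity_apply _ measurableSet_Icc.compl]
      rw [setLIntegral_congr_fun measurableSet_Icc.compl
        (fun x hx => ?_), lintegral_zero]
      have : fdens β x = 0 := Set.indicator_of_notMem hx _
      simp [this]
    have h0' : P (W ⁻¹' (Set.Icc (0:ℝ) 1)ᶜ) = 0 := by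
      rw [← Measure.map_apply hW measurableSet_Icc.compl]; exact h0
    rw [ae_iff]
    exact h0'
  -- integrability of g ∘ W
  have hgWint : Integrable (fun ω => g (W ω)) P := by
    apply Integrable.mono' (integrable_const (1:ℝ))
      ((hgm.comp hW).aestronglyMeasurable)
    filter_upwards [hWae] with ω hω
    have hle : -Real.log 2 * W ω ≤ 0 :=
      mul_nonpos_of_nonpos_of_nonneg (neg_nonpos.mpr (Real.log_nonneg one_le_two)) hω.1
    simp only [Function.comp_apply]
    rw [Real.norm_eq_abs, abs_of_pos (Real.exp_pos _)]
    exact Real.exp_le_one_iff.mpr hle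
  -- the integral of g ∘ W
  have hgWval : ∫ ω, g (W ω) ∂P =
      β * (Real.exp β - 2) / (2 * (Real.exp β - 1) * (β - Real.log 2)) := by
    have h1 : ∫ ω, g (W ω) ∂P = ∫ x, g x ∂(P.map W) :=
      (integral_map hW.aemeasurable hgm.aestronglyMeasurable).symm
    rw [h1, hlaw]
    have hdens : (fun x => ENNReal.ofReal (fdens β x)) =
        fun x => ((fdens β x).toNNReal : ℝ≥0∞) := rfl
    rw [hdens, integral_withDensity_eq_integral_smul
      ((fdens_measurable β).real_toNNReal) g]
    have h2 : ∀ x, (fdens β x).toNNReal • g x = fdens β x * g x := by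
      intro x
      rw [NNReal.smul_def, Real.coe_toNNReal _ (fdens_nonneg β x), smul_eq_mul]
    simp only [h2]
    have h3 : ∀ x, fdens β x * g x =
        Set.indicator (Set.Icc (0:ℝ) 1)
          (fun x => β / (Real.exp β - 1) * Real.exp ((β - Real.log 2) * x)) x := by
      intro x
      unfold fdens
      by_cases hx : x ∈ Set.Icc (0:ℝ) 1
      · rw [Set.indicator_of_mem hx, Set.indicator_of_mem hx, if_neg hβ0]
        have hexp : Real.exp (β * x) * Real.exp (-Real.log 2 * x)
            = Real.exp ((β - Real.log 2) * x) := by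
          rw [← Real.exp_add]; congr 1; ring
        show β * Real.exp (β * x) / (Real.exp β - 1) * Real.exp (-Real.log 2 * x)
            = β / (Real.exp β - 1) * Real.exp ((β - Real.log 2) * x)
        rw [← hexp]; ring
      · rw [Set.indicator_of_notMem hx, Set.indicator_of_notMem hx, zero_mul]
    simp only [h3]
    rw [integral_indicator measurableSet_Icc, integral_Icc_eq_integral_Ioc,
      ← intervalIntegral.integral_of_le (zero_le_one), intervalIntegral.integral_const_mul,
      intervalIntegral.integral_comp_mul_left Real.exp hc]
    simp only [mul_one, mul_zero, integral_exp, Real.exp_zero, smul_eq_mul]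
    rw [Real.exp_sub, Real.exp_log two_pos,
      eq_div_iff (mul_ne_zero (mul_ne_zero two_ne_zero he1) hc)]
    field_simp
  -- independence of W₀ and g ∘ W
  have hi : ProbabilityTheory.IndepFun W₀ (fun ω => g (W ω)) P :=
    hindep.symm.comp measurable_id hgm
  have hfun : (fun ω => W₀ ω * (2:ℝ) ^ (-W ω)) = W₀ * fun ω => g (W ω) := by
    funext ω
    simp only [Pi.mul_apply, hg2, hg]
  constructor
  · rw [hfun]
    exact hi.integrable_mul hW₀int hgWint
  · calc ∫ ω, W₀ ω * (2:ℝ) ^ (-W ω) ∂P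
        = ∫ ω, (W₀ * fun ω => g (W ω)) ω ∂P := by rw [← hfun]
      _ = (∫ ω, W₀ ω ∂P) * ∫ ω, g (W ω) ∂P :=
          hi.integral_mul_eq_mul_integral hW₀int.aestronglyMeasurable hgWint.aestronglyMeasurable
      _ = _ := by rw [hW₀val, hgWval]
end

section
/- Let (A_i)_{i≥1} be an independent sequence of events in a probability space (Ω, P), and set p_i = P(A_i). Then the probability that only finitely many of the events occur is P({ω ∈ Ω : {i ≥ 1 : ω ∈ A_i} is finite}) = ∏_{i=1}^{∞} (1 − p_i) + ∑_{j=1}^{∞} p_j · ∏_{i=j+1}^{∞} (1 − p_i), where the infinite products are limits of the partial products (which exist in [0,1] by monotonicity). -/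
open MeasureTheory Filter

/-- Weierstrass product inequality: `1 - ∑ f ≤ ∏ (1 - f)` for `f` with values in `[0,1]`. -/
lemma aux_one_sub_sum_le_prod {f : ℕ → ℝ} (h0 : ∀ i, 0 ≤ f i) (h1 : ∀ i, f i ≤ 1)
    (s : Finset ℕ) : 1 - ∑ i ∈ s, f i ≤ ∏ i ∈ s, (1 - f i) := by
  classical
  refine Finset.induction_on s (by simp) ?_
  intro a s ha ih
  rw [Finset.sum_insert ha, Finset.prod_insert ha]
  have hs0 : 0 ≤ ∑ i ∈ s, f i := Finset.sum_nonneg fun i _ => h0 i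
  have hfa : 0 ≤ 1 - f a := by linarith [h1 a]
  nlinarith [mul_le_mul_of_nonneg_left ih hfa, h0 a]

/-- Borel–Cantelli-type formula: for an independent sequence of events `A₀, A₁, A₂, …`
(the events "A_i, i ≥ 1" of the statement, relabelled to start at index `0`) with
`pᵢ = P(Aᵢ)`, the probability that only finitely many of them occur equals
`∏_{i=0}^∞ (1 - pᵢ) + ∑_{j=0}^∞ pⱼ ∏_{i=j+1}^∞ (1 - pᵢ)`, where the infinite products
`L j = ∏_{i=j}^∞ (1 - pᵢ)` are the limits of the partial products. -/
theorem stmt17 {Ω : Type*} [MeasurableSpace Ω] (P : Measure Ω) [IsProbabilityMeasure P]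
    (A : ℕ → Set Ω) (hA : ∀ i, MeasurableSet (A i))
    (hindep : ProbabilityTheory.iIndepSet A P)
    (L : ℕ → ℝ)
    (hL : ∀ j, Tendsto (fun m => ∏ i ∈ Finset.Ico j m, (1 - (P (A i)).toReal))
      atTop (nhds (L j))) :
    P {ω | {i : ℕ | ω ∈ A i}.Finite} =
      ENNReal.ofReal (L 0 + ∑' j : ℕ, (P (A j)).toReal * L (j + 1)) := by
  set p : ℕ → ℝ := fun i => (P (A i)).toReal with hp
  have hp0 : ∀ i, 0 ≤ p i := fun i => ENNReal.toReal_nonneg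
  have hp1 : ∀ i, p i ≤ 1 := fun i => by
    have := prob_le_one (μ := P) (s := A i)
    simpa using ENNReal.toReal_mono (by simp) this
  -- the recurrence L j = (1 - p j) * L (j+1)
  have hrec : ∀ j, L j = (1 - p j) * L (j + 1) := by
    intro j
    have h1 : Tendsto (fun m => (1 - p j) * ∏ i ∈ Finset.Ico (j + 1) m, (1 - p i))
        atTop (nhds ((1 - p j) * L (j + 1))) := (hL (j + 1)).const_mul _
    have h2 : Tendsto (fun m => ∏ i ∈ Finset.Ico j m, (1 - p i))
        atTop (nhds ((1 - p j) * L (j + 1))) := by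
      refine h1.congr' ?_
      filter_upwards [eventually_ge_atTop (j + 1)] with m hm
      exact (Finset.prod_eq_prod_Ico_succ_bot hm (fun i => 1 - p i)).symm
    exact tendsto_nhds_unique (hL j) h2
  have hLnn : ∀ j, 0 ≤ L j := fun j =>
    ge_of_tendsto' (hL j) fun m => Finset.prod_nonneg fun i _ => by linarith [hp1 i]
  have hLle1 : ∀ j, L j ≤ 1 := fun j =>
    le_of_tendsto' (hL j) fun m =>
      Finset.prod_le_one (fun i _ => by linarith [hp1 i]) (fun i _ => by linarith [hp0 i])
  have hmono : Monotone L := by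
    refine monotone_nat_of_le_succ fun j => ?_
    rw [hrec j]
    exact mul_le_of_le_one_left (hLnn (j + 1)) (by linarith [hp0 j])
  set ℓ : ℝ := ⨆ j, L j with hℓdef
  have hℓ : Tendsto L atTop (nhds ℓ) :=
    tendsto_atTop_ciSup hmono ⟨1, by rintro x ⟨j, rfl⟩; exact hLle1 j⟩
  -- the telescoping sum
  have hterm : ∀ j, p j * L (j + 1) = L (j + 1) - L j := by
    intro j; rw [hrec j]; ring
  have hsum : HasSum (fun j => p j * L (j + 1)) (ℓ - L 0) := by
    rw [hasSum_iff_tendsto_nat_of_nonneg fun j => mul_nonneg (hp0 j) (hLnn _)]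
    have : (fun n => ∑ j ∈ Finset.range n, p j * L (j + 1)) = fun n => L n - L 0 := by
      funext n
      simp only [hterm]
      exact Finset.sum_range_sub L n
    rw [this]
    exact hℓ.sub_const _
  have hRHS : ENNReal.ofReal (L 0 + ∑' j : ℕ, p j * L (j + 1)) = ENNReal.ofReal ℓ := by
    rw [hsum.tsum_eq]; ring_nf
  -- rewrite the set as the complement of the limsup
  have hset : {ω | {i : ℕ | ω ∈ A i}.Finite} = (limsup A atTop)ᶜ := by
    ext ω
    simp only [Set.mem_setOf_eq, Set.mem_compl_iff, mem_limsup_iff_frequently_mem,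
      Nat.frequently_atTop_iff_infinite, ← Set.not_infinite]
  have hlimmeas : MeasurableSet (limsup A atTop) := MeasurableSet.measurableSet_limsup hA
  rw [hset, hRHS, measure_compl hlimmeas (measure_ne_top _ _), measure_univ]
  by_cases hfin : ∑' i, P (A i) = ⊤
  · -- divergent case : limsup has measure one and ℓ = 0
    rw [ProbabilityTheory.measure_limsup_eq_one hA hindep hfin]
    have hpns : ¬ Summable p := by
      intro hs
      have heq : ∀ i, P (A i) = ENNReal.ofReal (p i) := fun i =>
        (ENNReal.ofReal_toReal (measure_ne_top _ _)).symm
      have : ∑' i, P (A i) ≠ ⊤ := by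
        rw [funext heq, ← ENNReal.ofReal_tsum_of_nonneg hp0 hs]
        exact ENNReal.ofReal_ne_top
      exact this hfin
    have hsums : Tendsto (fun n => ∑ i ∈ Finset.range n, p i) atTop atTop :=
      (not_summable_iff_tendsto_nat_atTop_of_nonneg hp0).mp hpns
    have hLzero : ∀ j, L j = 0 := by
      intro j
      have hS : Tendsto (fun m => ∑ i ∈ Finset.Ico j m, p i) atTop atTop := by
        have h1 : Tendsto (fun n => ∑ i ∈ Finset.range n, p i + -(∑ i ∈ Finset.range j, p i))
            atTop atTop := tendsto_atTop_add_const_right _ _ hsums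
        refine h1.congr' ?_
        filter_upwards [eventually_ge_atTop j] with m hm
        rw [Finset.sum_Ico_eq_sub _ hm]; ring
      have hexp : Tendsto (fun m => Real.exp (-(∑ i ∈ Finset.Ico j m, p i))) atTop (nhds 0) :=
        Real.tendsto_exp_atBot.comp (tendsto_neg_atBot_iff.mpr hS)
      have h0 : Tendsto (fun m => ∏ i ∈ Finset.Ico j m, (1 - p i)) atTop (nhds 0) := by
        refine tendsto_of_tendsto_of_tendsto_of_le_of_le tendsto_const_nhds hexp
          (fun m => Finset.prod_nonneg fun i _ => by linarith [hp1 i]) (fun m => ?_)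
        calc ∏ i ∈ Finset.Ico j m, (1 - p i)
            ≤ ∏ i ∈ Finset.Ico j m, Real.exp (-p i) := by
              refine Finset.prod_le_prod (fun i _ => by linarith [hp1 i]) fun i _ => ?_
              linarith [Real.add_one_le_exp (-p i)]
          _ = Real.exp (∑ i ∈ Finset.Ico j m, -p i) := (Real.exp_sum _ _).symm
          _ = Real.exp (-(∑ i ∈ Finset.Ico j m, p i)) := by rw [Finset.sum_neg_distrib]
      exact tendsto_nhds_unique (hL j) h0
    have hℓ0 : ℓ = 0 :=
      tendsto_nhds_unique hℓ (by simp only [funext hLzero]; exact tendsto_const_nhds)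
    simp [hℓ0]
  · -- summable case : limsup has measure zero and ℓ = 1
    rw [measure_limsup_atTop_eq_zero hfin]
    have hps : Summable p := by
      have := ENNReal.summable_toReal hfin
      simpa using this
    have hL1 : Tendsto L atTop (nhds 1) := by
      have htail : Tendsto (fun j => 1 - ∑' k, p (k + j)) atTop (nhds 1) := by
        have := (tendsto_sum_nat_add p).const_sub 1
        simpa using this
      refine tendsto_of_tendsto_of_tendsto_of_le_of_le htail tendsto_const_nhds
        (fun j => ?_) hLle1
      refine ge_of_tendsto' (hL j) fun m => ?_
      refine le_trans ?_ (aux_one_sub_sum_le_prod hp0 hp1 (Finset.Ico j m))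
      have : ∑ i ∈ Finset.Ico j m, p i ≤ ∑' k, p (k + j) := by
        have hsub : Summable fun k => p (k + j) := (summable_nat_add_iff j).mpr hps
        have := Summable.sum_le_tsum (Finset.range (m - j)) (fun i _ => hp0 _) hsub
        calc ∑ i ∈ Finset.Ico j m, p i = ∑ i ∈ Finset.range (m - j), p (i + j) := by
              rw [Finset.sum_Ico_eq_sum_range]
              exact Finset.sum_congr rfl fun i _ => by ring_nf
          _ ≤ ∑' k, p (k + j) := this
      linarith
    have hℓ1 : ℓ = 1 := tendsto_nhds_unique hℓ hL1
    simp [hℓ1]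
end

section
/- Let V be a finite abelian group, n ≥ 1, r ≥ 2, and let σ_1, …, σ_r be fixed-point-free involutions of {1,…,n} (i.e. permutations with σ_l ∘ σ_l = id and σ_l(i) ≠ i for all i). Let C be the n×n integer matrix with entries C_{ij} = |{l ∈ {1,…,r} : σ_l(i) = j}| (the adjacency matrix of the union of the r perfect matchings determined by the σ_l). Then for every q = (q_1,…,q_n) ∈ V^n, the vector (C − I)q ∈ V^n, whose i-th entry is (∑_{l=1}^{r} q_{σ_l(i)}) − q_i, belongs to R^S(q, r−1). -/
open scoped TensorProduct

/-- The subgroup `H` generated by `{qᵢ - qₙ}`, where `qₙ` is the last coordinate. -/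
def Hgrp {V : Type*} [AddCommGroup V] {n : ℕ} (q : Fin (n + 1) → V) : AddSubgroup V :=
  AddSubgroup.closure (Set.range fun i => q i - q (Fin.last n))

/-- `I(V)`: the subgroup of `V ⊗_ℤ V` generated by the elements `v ⊗ v`. -/
noncomputable def Igrp (V : Type*) [AddCommGroup V] : AddSubgroup (V ⊗[ℤ] V) :=
  AddSubgroup.closure {x : V ⊗[ℤ] V | ∃ v : V, x = v ⊗ₜ[ℤ] v}

/-- `R^S(q, k)`: the set of `s ∈ Vⁿ` with each `sᵢ` in the `k`-fold sumset
`k·𝒞 = k·qₙ + H` of the minimal coset `𝒞 = qₙ + H` containing `{q₁,…,qₙ}`,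
with `∑ᵢ qᵢ ⊗ sᵢ ∈ I(V)` and `∑ᵢ sᵢ = k·∑ᵢ qᵢ`. -/
noncomputable def RS {V : Type*} [AddCommGroup V] {n : ℕ} (q : Fin (n + 1) → V) (k : ℕ) :
    Set (Fin (n + 1) → V) :=
  {s | (∀ i, s i - k • q (Fin.last n) ∈ Hgrp q) ∧
    (∑ i, q i ⊗ₜ[ℤ] s i) ∈ Igrp V ∧
    (∑ i, s i) = k • ∑ i, q i}

lemma sq_mem_Igrp {V : Type*} [AddCommGroup V] (v : V) : v ⊗ₜ[ℤ] v ∈ Igrp V :=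
  AddSubgroup.subset_closure ⟨v, rfl⟩

lemma symm_mem_Igrp {V : Type*} [AddCommGroup V] (a b : V) :
    a ⊗ₜ[ℤ] b + b ⊗ₜ[ℤ] a ∈ Igrp V := by
  have h : a ⊗ₜ[ℤ] b + b ⊗ₜ[ℤ] a
      = (a + b) ⊗ₜ[ℤ] (a + b) - a ⊗ₜ[ℤ] a - b ⊗ₜ[ℤ] b := by
    simp [TensorProduct.add_tmul, TensorProduct.tmul_add]
    abel
  rw [h]
  exact sub_mem (sub_mem (sq_mem_Igrp _) (sq_mem_Igrp _)) (sq_mem_Igrp _)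

/-- If `σ₁, …, σ_r` are fixed-point-free involutions of `{1,…,n}` and `C` is the
adjacency matrix of the union of the corresponding perfect matchings
(`C_{ij} = #{l : σ_l(i) = j}`), then `(C - I)q`, whose `i`-th entry is
`(∑_l q_{σ_l(i)}) - q_i`, belongs to `R^S(q, r - 1)`. -/
theorem stmt19 {V : Type*} [AddCommGroup V] [Fintype V] {n : ℕ}
    (q : Fin (n + 1) → V) (r : ℕ) (hr : 2 ≤ r)
    (σ : Fin r → Fin (n + 1) → Fin (n + 1))
    (hinv : ∀ l, σ l ∘ σ l = id)
    (hfpf : ∀ l i, σ l i ≠ i) :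
    (fun i => (∑ l, q (σ l i)) - q i) ∈ RS q (r - 1) := by
  have hinv' : ∀ l i, σ l (σ l i) = i := fun l i => congrFun (hinv l) i
  obtain ⟨m, rfl⟩ : ∃ m, r = m + 2 := ⟨r - 2, by omega⟩
  have hgen : ∀ j, q j - q (Fin.last n) ∈ Hgrp q :=
    fun j => AddSubgroup.subset_closure ⟨j, rfl⟩
  refine ⟨?_, ?_, ?_⟩
  · intro i
    have e : (∑ l, q (σ l i)) - q i - (m + 2 - 1) • q (Fin.last n)
        = (∑ l : Fin (m + 2), (q (σ l i) - q (Fin.last n))) - (q i - q (Fin.last n)) := by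
      rw [Finset.sum_sub_distrib, Finset.sum_const, Finset.card_univ, Fintype.card_fin]
      show _ - _ - (m + 1) • _ = _
      rw [succ_nsmul (q (Fin.last n)) (m + 1)]
      abel
    rw [e]
    exact sub_mem (AddSubgroup.sum_mem _ fun l _ => hgen _) (hgen i)
  · have key : ∀ l, (∑ i, q i ⊗ₜ[ℤ] q (σ l i)) ∈ Igrp V := by
      intro l
      rw [← QuotientAddGroup.eq_zero_iff (N := Igrp V)]
      rw [show ((∑ i, q i ⊗ₜ[ℤ] q (σ l i) : V ⊗[ℤ] V) : (V ⊗[ℤ] V) ⧸ Igrp V)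
          = ∑ i, ((q i ⊗ₜ[ℤ] q (σ l i) : V ⊗[ℤ] V) : (V ⊗[ℤ] V) ⧸ Igrp V) from
        map_sum (QuotientAddGroup.mk' (Igrp V)) _ _]
      refine Finset.sum_ninvolution (σ l) ?_ ?_ (fun _ => Finset.mem_univ _) (hinv' l)
      · intro a
        rw [hinv' l a, ← QuotientAddGroup.mk_add, QuotientAddGroup.eq_zero_iff]
        exact symm_mem_Igrp _ _
      · intro a _
        exact hfpf l a
    have e : (∑ i, q i ⊗ₜ[ℤ] ((∑ l, q (σ l i)) - q i))
        = (∑ l, ∑ i, q i ⊗ₜ[ℤ] q (σ l i)) - ∑ i, q i ⊗ₜ[ℤ] q i := by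
      have e1 : (∑ i, q i ⊗ₜ[ℤ] ((∑ l, q (σ l i)) - q i))
          = ∑ i, ((∑ l, q i ⊗ₜ[ℤ] q (σ l i)) - q i ⊗ₜ[ℤ] q i) :=
        Finset.sum_congr rfl fun i _ => by
          rw [TensorProduct.tmul_sub, TensorProduct.tmul_sum]
      rw [e1, Finset.sum_sub_distrib, Finset.sum_comm]
    show (∑ i, q i ⊗ₜ[ℤ] ((∑ l, q (σ l i)) - q i)) ∈ Igrp V
    rw [e]
    exact sub_mem (AddSubgroup.sum_mem _ fun l _ => key l)
      (AddSubgroup.sum_mem _ fun i _ => sq_mem_Igrp _)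
  · have hσsum : ∀ l, (∑ i, q (σ l i)) = ∑ i, q i := by
      intro l
      have hbij : Function.Bijective (σ l) :=
        (Function.Involutive.bijective fun x => hinv' l x)
      exact Fintype.sum_bijective (σ l) hbij _ _ (fun x => rfl)
    show (∑ i, ((∑ l, q (σ l i)) - q i)) = (m + 2 - 1) • ∑ i, q i
    rw [Finset.sum_sub_distrib, Finset.sum_comm]
    simp only [hσsum]
    rw [Finset.sum_const, Finset.card_univ, Fintype.card_fin]
    rw [show m + 2 - 1 = m + 1 from rfl, succ_nsmul]
    abel
end
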